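/- arXiv:2508.18244 — 2 statements merged into one kernel-verified Lean document; each statement's English description precedes it below -/
import Mathlib

section
/- Let p_θ be a family of probability distributions on a finite set S parametrized smoothly by θ ∈ ℝ^d, let V ⊆ S, and let Z(θ) = ∑_{y∈V} p_θ(y) > 0. Suppose that for every y ∈ S, the sup-norm of the gradient ∇_θ log p_θ(y) is at most G. Then the sup-norm of ∇_θ log Z(θ) is at most 2G(1 − Z(θ)). -/
/-- Bound on the gradient of the log partition function: if the score vectors are
bounded by `G` in sup-norm (componentwise), then `‖∇ log Z(θ)‖_∞ ≤ 2G(1 - Z(θ))`. -/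
theorem stmt_1 {S : Type*} [Fintype S] {d : ℕ}
    (p : (Fin d → ℝ) → S → ℝ)
    (hpos : ∀ θ y, 0 < p θ y) (hsum : ∀ θ, ∑ y, p θ y = 1)
    (hdiff : ∀ θ y, DifferentiableAt ℝ (fun θ' => p θ' y) θ)
    (V : Finset S) (θ : Fin d → ℝ)
    (hZpos : 0 < ∑ y ∈ V, p θ y)
    (G : ℝ)
    (hG : ∀ y i, |fderiv ℝ (fun θ' => Real.log (p θ' y)) θ (Pi.single i 1)| ≤ G) :
    ∀ i, |fderiv ℝ (fun θ' => Real.log (∑ y ∈ V, p θ' y)) θ (Pi.single i 1)|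
      ≤ 2 * G * (1 - ∑ y ∈ V, p θ y) := by
  intro i
  classical
  -- S nonempty
  rcases isEmpty_or_nonempty S with hS | hS
  · exfalso
    have := hsum θ
    simp [Finset.univ_eq_empty] at this
  set Z : ℝ := ∑ y ∈ V, p θ y with hZdef
  set a : S → ℝ := fun y => fderiv ℝ (fun θ' => p θ' y) θ (Pi.single i 1) with ha
  obtain ⟨y0⟩ := hS
  -- log derivative of each p
  have hlog : ∀ y, fderiv ℝ (fun θ' => Real.log (p θ' y)) θ
      = (p θ y)⁻¹ • fderiv ℝ (fun θ' => p θ' y) θ := by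
    intro y
    exact ((hdiff θ y).hasFDerivAt.log (hpos θ y).ne').fderiv
  have hG0 : 0 ≤ G := le_trans (abs_nonneg _) (hG y0 i)
  have hGa : ∀ y : S, |a y| ≤ G * p θ y := by
    intro y
    have h := hG y i
    rw [hlog y] at h
    simp only [ContinuousLinearMap.smul_apply, smul_eq_mul, abs_mul, abs_inv,
      abs_of_pos (hpos θ y)] at h
    have hp := hpos θ y
    calc |a y| = p θ y * ((p θ y)⁻¹ * |a y|) := by field_simp
      _ ≤ p θ y * G := mul_le_mul_of_nonneg_left h hp.le
      _ = G * p θ y := mul_comm _ _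
  -- sum of derivatives is zero
  have hsum0 : ∑ y, a y = 0 := by
    have h1 : HasFDerivAt (fun θ' => ∑ y, p θ' y)
        (∑ y, fderiv ℝ (fun θ' => p θ' y) θ) θ :=
      HasFDerivAt.fun_sum (fun y _ => (hdiff θ y).hasFDerivAt)
    have heq : (fun θ' => ∑ y, p θ' y) = fun _ : Fin d → ℝ => (1 : ℝ) :=
      funext hsum
    rw [heq] at h1
    have h2 : (∑ y, fderiv ℝ (fun θ' => p θ' y) θ) = 0 :=
      h1.unique (hasFDerivAt_const 1 θ)
    calc ∑ y, a y = (∑ y, fderiv ℝ (fun θ' => p θ' y) θ) (Pi.single i 1) := by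
          rw [ContinuousLinearMap.sum_apply]
      _ = 0 := by rw [h2]; rfl
  -- derivative of log Z
  have hZder : fderiv ℝ (fun θ' => Real.log (∑ y ∈ V, p θ' y)) θ (Pi.single i 1)
      = (∑ y ∈ V, a y) / Z := by
    have hf : HasFDerivAt (fun θ' => ∑ y ∈ V, p θ' y)
        (∑ y ∈ V, fderiv ℝ (fun θ' => p θ' y) θ) θ :=
      HasFDerivAt.fun_sum (fun y _ => (hdiff θ y).hasFDerivAt)
    have := (hf.log hZpos.ne').fderiv
    rw [this]
    simp only [ContinuousLinearMap.smul_apply, smul_eq_mul,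
      ContinuousLinearMap.sum_apply]
    rw [div_eq_inv_mul]
  set A : ℝ := ∑ y ∈ V, a y with hA
  have hZ1 : Z ≤ 1 := by
    rw [← hsum θ]
    exact Finset.sum_le_sum_of_subset_of_nonneg (Finset.subset_univ V)
      (fun y _ _ => (hpos θ y).le)
  have hA1 : |A| ≤ G * Z := by
    calc |A| ≤ ∑ y ∈ V, |a y| := Finset.abs_sum_le_sum_abs _ _
      _ ≤ ∑ y ∈ V, G * p θ y := Finset.sum_le_sum (fun y _ => hGa y)
      _ = G * Z := by rw [Finset.mul_sum]
  have hA2 : |A| ≤ G * (1 - Z) := by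
    have hsplit : A + ∑ y ∈ Finset.univ \ V, a y = 0 := by
      have h := Finset.sum_sdiff (f := a) (Finset.subset_univ V)
      rw [hA]
      linarith [hsum0, h]
    have hAeq : A = -(∑ y ∈ Finset.univ \ V, a y) := by linarith
    have hZc : (1 : ℝ) - Z = ∑ y ∈ Finset.univ \ V, p θ y := by
      have := Finset.sum_sdiff (h := Finset.subset_univ V) (f := p θ)
      rw [hsum θ] at this
      linarith
    rw [hAeq, abs_neg, hZc]
    calc |∑ y ∈ Finset.univ \ V, a y| ≤ ∑ y ∈ Finset.univ \ V, |a y| :=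
          Finset.abs_sum_le_sum_abs _ _
      _ ≤ ∑ y ∈ Finset.univ \ V, G * p θ y := Finset.sum_le_sum (fun y _ => hGa y)
      _ = G * ∑ y ∈ Finset.univ \ V, p θ y := by rw [Finset.mul_sum]
  rw [hZder, abs_div, abs_of_pos hZpos, div_le_iff₀ hZpos]
  rcases le_or_gt Z (1/2) with hc | hc
  · nlinarith [hA1, hZpos, hG0]
  · nlinarith [hA2, hZpos, hG0, hZ1]
end

section
/- Combining the previous results: under the uniform score bound ‖∇_θ log p_θ(y)‖_∞ ≤ G for all y ∈ S, the gradient of the unnormalized log-likelihood approximates the gradient of the normalized log-likelihood with error at most 2G(1 − Z(θ)) in sup-norm: ‖∇_θ L'(θ) − ∇_θ L(θ)‖_∞ ≤ 2G(1 − Z(θ)). -/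
/-- Under a uniform sup-norm score bound `G`, the gradient of the unnormalized
log-likelihood approximates the gradient of the normalized log-likelihood with
error at most `2G(1 - Z(θ))` in sup-norm (componentwise). -/
theorem stmt_11 {S : Type*} [Fintype S] {d : ℕ}
    (p : (Fin d → ℝ) → S → ℝ)
    (hpos : ∀ θ y, 0 < p θ y) (hsum : ∀ θ, ∑ y, p θ y = 1)
    (hdiff : ∀ θ y, DifferentiableAt ℝ (fun θ' => p θ' y) θ)
    (V : Finset S) (hZpos : ∀ θ, 0 < ∑ y ∈ V, p θ y)
    (ystar : S) (hy : ystar ∈ V) (θ : Fin d → ℝ)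
    (G : ℝ)
    (hG : ∀ y i, |fderiv ℝ (fun θ' => Real.log (p θ' y)) θ (Pi.single i 1)| ≤ G) :
    ∀ i, |fderiv ℝ (fun θ' => Real.log (p θ' ystar)) θ (Pi.single i 1)
          - fderiv ℝ (fun θ' => Real.log (p θ' ystar / ∑ y ∈ V, p θ' y)) θ (Pi.single i 1)|
      ≤ 2 * G * (1 - ∑ y ∈ V, p θ y) := by
  classical
  intro i
  set v : Fin d → ℝ := Pi.single i 1 with hv
  have hZ : (0:ℝ) < ∑ y ∈ V, p θ y := hZpos θ
  have hZle : (∑ y ∈ V, p θ y) ≤ 1 := by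
    rw [← hsum θ]
    exact Finset.sum_le_sum_of_subset_of_nonneg (Finset.subset_univ V)
      (fun y _ _ => (hpos θ y).le)
  have hdZ : DifferentiableAt ℝ (fun θ' => ∑ y ∈ V, p θ' y) θ :=
    DifferentiableAt.fun_sum fun y _ => hdiff θ y
  have hfun : (fun θ' => Real.log (p θ' ystar / ∑ y ∈ V, p θ' y))
      = fun θ' => Real.log (p θ' ystar) - Real.log (∑ y ∈ V, p θ' y) := by
    funext θ'
    exact Real.log_div (hpos θ' ystar).ne' (hZpos θ').ne'
  have hlogy : DifferentiableAt ℝ (fun θ' => Real.log (p θ' ystar)) θ :=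
    (hdiff θ ystar).log (hpos θ ystar).ne'
  have hlogZ : DifferentiableAt ℝ (fun θ' => Real.log (∑ y ∈ V, p θ' y)) θ :=
    hdZ.log hZ.ne'
  have hsplit : fderiv ℝ (fun θ' => Real.log (p θ' ystar / ∑ y ∈ V, p θ' y)) θ
      = fderiv ℝ (fun θ' => Real.log (p θ' ystar)) θ
        - fderiv ℝ (fun θ' => Real.log (∑ y ∈ V, p θ' y)) θ := by
    rw [hfun]
    exact fderiv_sub hlogy hlogZ
  rw [hsplit]
  rw [ContinuousLinearMap.sub_apply]
  have hgoalsimp : ∀ a b : ℝ, a - (a - b) = b := by intro a b; ring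
  rw [hgoalsimp]
  -- abbreviations
  set F : S → ℝ := fun y => fderiv ℝ (fun θ' => p θ' y) θ v with hF
  -- relation between F and the log-derivatives
  have hgrel : ∀ y, F y
      = p θ y * fderiv ℝ (fun θ' => Real.log (p θ' y)) θ v := by
    intro y
    rw [fderiv.log (hdiff θ y) (hpos θ y).ne']
    simp only [hF, ContinuousLinearMap.smul_apply, smul_eq_mul]
    field_simp
    rw [mul_div_assoc, div_self (hpos θ y).ne', mul_one]
  -- value of the logZ derivative
  have hlogZ' : fderiv ℝ (fun θ' => Real.log (∑ y ∈ V, p θ' y)) θ v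
      = (∑ y ∈ V, p θ y)⁻¹ * (∑ y ∈ V, F y) := by
    rw [fderiv.log hdZ hZ.ne']
    rw [fderiv_fun_sum fun y _ => hdiff θ y]
    simp [hF, ContinuousLinearMap.sum_apply]
  -- the full sum of F vanishes
  have hsum0 : ∑ y, F y = 0 := by
    have h1 : (fun θ' : Fin d → ℝ => ∑ y, p θ' y) = fun _ => (1:ℝ) := funext hsum
    have h2 : fderiv ℝ (fun θ' : Fin d → ℝ => ∑ y, p θ' y) θ
        = ∑ y, fderiv ℝ (fun θ' => p θ' y) θ :=
      fderiv_fun_sum fun y _ => hdiff θ y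
    have h3 : fderiv ℝ (fun θ' : Fin d → ℝ => ∑ y, p θ' y) θ = 0 := by
      rw [h1]; exact fderiv_const_apply 1
    have h4 := congrArg (fun L : (Fin d → ℝ) →L[ℝ] ℝ => L v) (h2.symm.trans h3)
    simpa [hF, ContinuousLinearMap.sum_apply] using h4
  -- componentwise bound on |F y|
  have hFb : ∀ y, |F y| ≤ G * p θ y := by
    intro y
    rw [hgrel y, abs_mul, abs_of_pos (hpos θ y), mul_comm]
    exact mul_le_mul_of_nonneg_right (hG y i) (hpos θ y).le
  have hGnn : 0 ≤ G := le_trans (abs_nonneg _) (hG ystar i)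
  -- bound 1 : |S1| ≤ G * Z
  have hb1 : |∑ y ∈ V, F y| ≤ G * (∑ y ∈ V, p θ y) := by
    calc |∑ y ∈ V, F y| ≤ ∑ y ∈ V, |F y| := Finset.abs_sum_le_sum_abs _ _
      _ ≤ ∑ y ∈ V, G * p θ y := Finset.sum_le_sum fun y _ => hFb y
      _ = G * ∑ y ∈ V, p θ y := (Finset.mul_sum _ _ _).symm
  -- bound 2 : |S1| ≤ G * (1 - Z), via the complement
  have hcompl : ∑ y ∈ Vᶜ, F y = -∑ y ∈ V, F y := by
    have h := Finset.sum_add_sum_compl V F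
    rw [hsum0] at h
    linarith
  have hpcompl : ∑ y ∈ Vᶜ, p θ y = 1 - ∑ y ∈ V, p θ y := by
    have h := Finset.sum_add_sum_compl V (fun y => p θ y)
    rw [hsum θ] at h
    linarith
  have hb2 : |∑ y ∈ V, F y| ≤ G * (1 - ∑ y ∈ V, p θ y) := by
    have : |∑ y ∈ Vᶜ, F y| ≤ G * (1 - ∑ y ∈ V, p θ y) := by
      calc |∑ y ∈ Vᶜ, F y| ≤ ∑ y ∈ Vᶜ, |F y| := Finset.abs_sum_le_sum_abs _ _
        _ ≤ ∑ y ∈ Vᶜ, G * p θ y := Finset.sum_le_sum fun y _ => hFb y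
        _ = G * ∑ y ∈ Vᶜ, p θ y := (Finset.mul_sum _ _ _).symm
        _ = G * (1 - ∑ y ∈ V, p θ y) := by rw [hpcompl]
    rwa [hcompl, abs_neg] at this
  -- final arithmetic
  rw [hlogZ', abs_mul, abs_of_pos (inv_pos.mpr hZ)]
  have hinv : (∑ y ∈ V, p θ y) * (∑ y ∈ V, p θ y)⁻¹ = 1 := mul_inv_cancel₀ hZ.ne'
  nlinarith [hb1, hb2, hZ, hZle, hinv, abs_nonneg (∑ y ∈ V, F y),
    inv_pos.mpr hZ, mul_pos hZ (inv_pos.mpr hZ)]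
end
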